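/- For all x, x̄ ∈ E and y, ȳ ∈ ℝ^m, setting Δ² = ‖x − x̄‖² + ‖y − ȳ‖², one has ‖ Σ_{i=1}^m (y_i ∇g_i(x) − ȳ_i ∇g_i(x̄)) ‖² + Σ_{i=1}^m (g_i(x̄) − g_i(x))² ≤ a(x, y)·Δ² + b·Δ⁴, where b = (5/2)·Σ_{i=1}^m L_{g_i}², ρ(x, y) = 2·max{ m·max_{1≤i≤m} ‖∇g_i(x)‖², (Σ_{i=1}^m L_{g_i}|y_i|)² }, and a(x, y) = 2·( ρ(x, y) + Σ_{i=1}^m ‖∇g_i(x)‖² ). -/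

import Mathlib

set_option maxHeartbeats 1000000 in
theorem generalized_lipschitz_saddle_multi
    {E : Type*} [NormedAddCommGroup E] [InnerProductSpace ℝ E]
    (m : ℕ) [NeZero m]
    (g : Fin m → E → ℝ) (g' : Fin m → E → E)
    (Lg : Fin m → ℝ) (hLg : ∀ i, 0 < Lg i)
    (hgrad : ∀ (i : Fin m) (v : E),
      HasFDerivAt (g i) ((InnerProductSpace.toDualMap ℝ E (g' i v) : E →L[ℝ] ℝ)) v)
    (hLip : ∀ (i : Fin m) (v w : E), ‖g' i v - g' i w‖ ≤ Lg i * ‖v - w‖) :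
    ∀ (x xb : E) (y yb : EuclideanSpace ℝ (Fin m)),
      ‖∑ i, (y i • g' i x - yb i • g' i xb)‖ ^ 2 + ∑ i, (g i xb - g i x) ^ 2 ≤
        2 * (2 * max ((m : ℝ) * ⨆ i : Fin m, ‖g' i x‖ ^ 2) ((∑ i, Lg i * |y i|) ^ 2)
              + ∑ i, ‖g' i x‖ ^ 2) * (‖x - xb‖ ^ 2 + ‖y - yb‖ ^ 2)
          + (5 / 2 * ∑ i, Lg i ^ 2) * (‖x - xb‖ ^ 2 + ‖y - yb‖ ^ 2) ^ 2 := by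
  intro x xb y yb
  set d : ℝ := ‖x - xb‖ with hd
  set e : ℝ := ‖y - yb‖ with he
  have hd0 : 0 ≤ d := norm_nonneg _
  have he0 : 0 ≤ e := norm_nonneg _
  set G2 : ℝ := ∑ i, ‖g' i x‖ ^ 2 with hG2
  set SL2 : ℝ := ∑ i, Lg i ^ 2 with hSL2
  set SLy : ℝ := ∑ i, Lg i * |y i| with hSLy
  set M : ℝ := ⨆ i : Fin m, ‖g' i x‖ ^ 2 with hM
  have hG2nn : 0 ≤ G2 := Finset.sum_nonneg fun i _ => sq_nonneg _
  have hSL2nn : 0 ≤ SL2 := Finset.sum_nonneg fun i _ => sq_nonneg _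
  -- e^2 as a sum
  have he2 : e ^ 2 = ∑ i, (y i - yb i) ^ 2 := by
    rw [he, EuclideanSpace.norm_eq, Real.sq_sqrt (Finset.sum_nonneg fun i _ => sq_nonneg _)]
    congr 1; ext i
    simp [sq_abs]
  -- Lipschitz bound on gradient differences
  have hLipd : ∀ i : Fin m, ‖g' i x - g' i xb‖ ≤ Lg i * d := fun i => hLip i x xb
  -- (D) descent-type lemma
  have hdesc : ∀ i : Fin m, |g i xb - g i x| ≤ ‖g' i x‖ * d + Lg i * d ^ 2 := by
    intro i
    have hball : Convex ℝ (Metric.closedBall x d) := convex_closedBall _ _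
    have hxmem : x ∈ Metric.closedBall x d := Metric.mem_closedBall_self hd0
    have hxbmem : xb ∈ Metric.closedBall x d := by
      simp [Metric.mem_closedBall, dist_eq_norm, hd, ← norm_sub_rev x xb]
    have key := hball.norm_image_sub_le_of_norm_hasFDerivWithin_le'
      (f := g i) (f' := fun z => (InnerProductSpace.toDualMap ℝ E (g' i z) : E →L[ℝ] ℝ))
      (φ := (InnerProductSpace.toDualMap ℝ E (g' i x) : E →L[ℝ] ℝ)) (C := Lg i * d)
      (fun z _ => (hgrad i z).hasFDerivWithinAt)
      (fun z hz => by
        have : (InnerProductSpace.toDualMap ℝ E (g' i z) : E →L[ℝ] ℝ)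
            - (InnerProductSpace.toDualMap ℝ E (g' i x) : E →L[ℝ] ℝ)
            = (InnerProductSpace.toDualMap ℝ E (g' i z - g' i x) : E →L[ℝ] ℝ) := by
          ext v; simp [InnerProductSpace.toDualMap_apply_apply, inner_sub_left]
        rw [this]
        calc ‖(InnerProductSpace.toDualMap ℝ E (g' i z - g' i x) : E →L[ℝ] ℝ)‖
            = ‖g' i z - g' i x‖ := (InnerProductSpace.toDualMap ℝ E).norm_map _
          _ ≤ Lg i * ‖z - x‖ := hLip i z x
          _ ≤ Lg i * d := by
              have := Metric.mem_closedBall.mp hz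
              rw [dist_eq_norm] at this
              exact mul_le_mul_of_nonneg_left this (hLg i).le)
      hxmem hxbmem
    have hxbx : ‖xb - x‖ = d := by rw [hd, norm_sub_rev]
    rw [hxbx] at key
    have hinner : |(InnerProductSpace.toDualMap ℝ E (g' i x) : E →L[ℝ] ℝ) (xb - x)|
        ≤ ‖g' i x‖ * d := by
      rw [InnerProductSpace.toDualMap_apply_apply]
      calc |(inner ℝ (g' i x) (xb - x) : ℝ)| ≤ ‖g' i x‖ * ‖xb - x‖ := abs_real_inner_le_norm _ _
        _ = ‖g' i x‖ * d := by rw [hxbx]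
    have h1 : |g i xb - g i x - (InnerProductSpace.toDualMap ℝ E (g' i x) : E →L[ℝ] ℝ) (xb - x)|
        ≤ Lg i * d * d := key
    have h2 : |g i xb - g i x|
        ≤ |g i xb - g i x - (InnerProductSpace.toDualMap ℝ E (g' i x) : E →L[ℝ] ℝ) (xb - x)|
          + |(InnerProductSpace.toDualMap ℝ E (g' i x) : E →L[ℝ] ℝ) (xb - x)| := by
      have := abs_add_le (g i xb - g i x
        - (InnerProductSpace.toDualMap ℝ E (g' i x) : E →L[ℝ] ℝ) (xb - x))
        ((InnerProductSpace.toDualMap ℝ E (g' i x) : E →L[ℝ] ℝ) (xb - x))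
      simpa using this
    nlinarith [h2, h1, hinner]
  -- sum of squares of function differences
  have hB : ∑ i, (g i xb - g i x) ^ 2 ≤ 2 * G2 * d ^ 2 + 2 * SL2 * d ^ 4 := by
    have : ∀ i ∈ Finset.univ, (g i xb - g i x) ^ 2
        ≤ 2 * ‖g' i x‖ ^ 2 * d ^ 2 + 2 * Lg i ^ 2 * d ^ 4 := by
      intro i _
      have h := hdesc i
      have habs : (g i xb - g i x) ^ 2 = |g i xb - g i x| ^ 2 := (sq_abs _).symm
      rw [habs]
      nlinarith [abs_nonneg (g i xb - g i x), sq_nonneg (‖g' i x‖ * d - Lg i * d ^ 2)]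
    calc ∑ i, (g i xb - g i x) ^ 2
        ≤ ∑ i, (2 * ‖g' i x‖ ^ 2 * d ^ 2 + 2 * Lg i ^ 2 * d ^ 4) := Finset.sum_le_sum this
      _ = ∑ i, (‖g' i x‖ ^ 2 * (2 * d ^ 2) + Lg i ^ 2 * (2 * d ^ 4)) :=
          Finset.sum_congr rfl fun i _ => by ring
      _ = G2 * (2 * d ^ 2) + SL2 * (2 * d ^ 4) := by
          rw [Finset.sum_add_distrib, ← Finset.sum_mul, ← Finset.sum_mul, ← hG2, ← hSL2]
      _ = 2 * G2 * d ^ 2 + 2 * SL2 * d ^ 4 := by ring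
  -- decompose the vector sum
  set S1 : E := ∑ i, (y i - yb i) • g' i x with hS1
  set S2 : E := ∑ i, y i • (g' i x - g' i xb) with hS2
  set S3 : E := ∑ i, (yb i - y i) • (g' i x - g' i xb) with hS3
  have hdecomp : ∑ i, (y i • g' i x - yb i • g' i xb) = S1 + S2 + S3 := by
    rw [hS1, hS2, hS3, ← Finset.sum_add_distrib, ← Finset.sum_add_distrib]
    congr 1; ext i
    simp only [smul_sub, sub_smul]
    abel
  -- bounds on the three pieces
  have hnS1 : ‖S1‖ ^ 2 ≤ G2 * e ^ 2 := by
    have h1 : ‖S1‖ ≤ ∑ i, |y i - yb i| * ‖g' i x‖ := by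
      refine (norm_sum_le _ _).trans (Finset.sum_le_sum fun i _ => ?_)
      rw [norm_smul, Real.norm_eq_abs]
    have h2 : (∑ i, |y i - yb i| * ‖g' i x‖) ^ 2
        ≤ (∑ i, |y i - yb i| ^ 2) * ∑ i, ‖g' i x‖ ^ 2 :=
      Finset.sum_mul_sq_le_sq_mul_sq _ _ _
    have h3 : (∑ i, |y i - yb i| ^ 2) = e ^ 2 := by
      rw [he2]; congr 1; ext i; rw [sq_abs]
    calc ‖S1‖ ^ 2 ≤ (∑ i, |y i - yb i| * ‖g' i x‖) ^ 2 := by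
          apply pow_le_pow_left₀ (norm_nonneg _) h1
      _ ≤ (∑ i, |y i - yb i| ^ 2) * ∑ i, ‖g' i x‖ ^ 2 := h2
      _ = G2 * e ^ 2 := by rw [h3, hG2]; ring
  have hnS2 : ‖S2‖ ≤ SLy * d := by
    calc ‖S2‖ ≤ ∑ i, |y i| * ‖g' i x - g' i xb‖ := by
          refine (norm_sum_le _ _).trans (Finset.sum_le_sum fun i _ => ?_)
          rw [norm_smul, Real.norm_eq_abs]
      _ ≤ ∑ i, |y i| * (Lg i * d) := Finset.sum_le_sum fun i _ =>
          mul_le_mul_of_nonneg_left (hLipd i) (abs_nonneg _)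
      _ = SLy * d := by rw [hSLy, Finset.sum_mul]; congr 1; ext i; ring
  have hnS3 : ‖S3‖ ^ 2 ≤ SL2 * e ^ 2 * d ^ 2 := by
    have h1 : ‖S3‖ ≤ ∑ i, |yb i - y i| * (Lg i * d) := by
      refine (norm_sum_le _ _).trans (Finset.sum_le_sum fun i _ => ?_)
      rw [norm_smul, Real.norm_eq_abs]
      exact mul_le_mul_of_nonneg_left (hLipd i) (abs_nonneg _)
    have h2 : (∑ i, |yb i - y i| * (Lg i * d)) ^ 2
        ≤ (∑ i, |yb i - y i| ^ 2) * ∑ i, (Lg i * d) ^ 2 :=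
      Finset.sum_mul_sq_le_sq_mul_sq _ _ _
    have h3 : (∑ i, |yb i - y i| ^ 2) = e ^ 2 := by
      rw [he2]; congr 1; ext i; rw [abs_sub_comm, sq_abs]
    have h4 : (∑ i, (Lg i * d) ^ 2) = SL2 * d ^ 2 := by
      rw [hSL2, Finset.sum_mul]; congr 1; ext i; ring
    have h1nn : 0 ≤ ∑ i, |yb i - y i| * (Lg i * d) :=
      Finset.sum_nonneg fun i _ => mul_nonneg (abs_nonneg _) (mul_nonneg (hLg i).le hd0)
    calc ‖S3‖ ^ 2 ≤ (∑ i, |yb i - y i| * (Lg i * d)) ^ 2 := pow_le_pow_left₀ (norm_nonneg _) h1 2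
      _ ≤ (∑ i, |yb i - y i| ^ 2) * ∑ i, (Lg i * d) ^ 2 := h2
      _ = SL2 * e ^ 2 * d ^ 2 := by rw [h3, h4]; ring
  -- combined bound on the vector term
  have hA : ‖∑ i, (y i • g' i x - yb i • g' i xb)‖ ^ 2
      ≤ 4 * G2 * e ^ 2 + 4 * SLy ^ 2 * d ^ 2 + 2 * SL2 * e ^ 2 * d ^ 2 := by
    rw [hdecomp]
    have htri : ‖S1 + S2 + S3‖ ≤ ‖S1‖ + ‖S2‖ + ‖S3‖ :=
      (norm_add_le _ _).trans (add_le_add_left (norm_add_le _ _) _)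
    have hsq : ‖S1 + S2 + S3‖ ^ 2 ≤ (‖S1‖ + ‖S2‖ + ‖S3‖) ^ 2 :=
      pow_le_pow_left₀ (norm_nonneg _) htri 2
    have hS2sq : ‖S2‖ ^ 2 ≤ (SLy * d) ^ 2 := pow_le_pow_left₀ (norm_nonneg _) hnS2 2
    nlinarith [norm_nonneg S1, norm_nonneg S2, norm_nonneg S3,
      sq_nonneg (‖S1‖ + ‖S2‖ - ‖S3‖), sq_nonneg (‖S1‖ - ‖S2‖)]
  -- G2 ≤ m * M
  have hGM : G2 ≤ (m : ℝ) * M := by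
    have hbdd : BddAbove (Set.range fun i : Fin m => ‖g' i x‖ ^ 2) :=
      (Set.finite_range _).bddAbove
    have hle : ∀ i ∈ Finset.univ, ‖g' i x‖ ^ 2 ≤ M := fun i _ => le_ciSup hbdd i
    calc G2 ≤ (Finset.univ : Finset (Fin m)).card • M := Finset.sum_le_card_nsmul _ _ _ hle
      _ = (m : ℝ) * M := by rw [Finset.card_univ, Fintype.card_fin, nsmul_eq_mul]
  -- final arithmetic
  set K : ℝ := max ((m : ℝ) * M) (SLy ^ 2) with hK
  have hmax2 : SLy ^ 2 ≤ K := le_max_right _ _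
  have hGmax : G2 ≤ K := hGM.trans (le_max_left _ _)
  have p1 : G2 * e ^ 2 ≤ K * e ^ 2 := mul_le_mul_of_nonneg_right hGmax (sq_nonneg e)
  have p2 : SLy ^ 2 * d ^ 2 ≤ K * d ^ 2 := mul_le_mul_of_nonneg_right hmax2 (sq_nonneg d)
  have p3 : 2 * SL2 * e ^ 2 * d ^ 2 + 2 * SL2 * d ^ 4 ≤ 5 / 2 * SL2 * (d ^ 2 + e ^ 2) ^ 2 := by
    nlinarith [mul_nonneg hSL2nn (mul_nonneg (sq_nonneg d) (sq_nonneg e)),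
      mul_nonneg hSL2nn (sq_nonneg (d ^ 2)), mul_nonneg hSL2nn (sq_nonneg (e ^ 2))]
  have p4 : 0 ≤ G2 * e ^ 2 := mul_nonneg hG2nn (sq_nonneg e)
  have hexp : 2 * (2 * K + G2) * (d ^ 2 + e ^ 2)
      = 4 * (K * d ^ 2) + 4 * (K * e ^ 2) + 2 * (G2 * d ^ 2) + 2 * (G2 * e ^ 2) := by ring
  linarith [hA, hB, p1, p2, p3, p4, hexp]
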